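/- Let J be a bounded symmetric involution on a Hilbert space H and T a densely defined closed operator with T = J T* J. If λ ∈ σ_ap(T) is a spectral point of positive type (every unit-norm approximate eigensequence fₙ for λ satisfies liminf (Jfₙ, fₙ) > 0) or of negative type (limsup (Jfₙ, fₙ) < 0), then λ is real. -/

import Mathlib

open scoped InnerProductSpace

/-- The operator `f ↦ J (S (J f))` with domain `{f : J f ∈ dom S}`, used to
express `J`-self-adjointness `T = J T* J` of an unbounded operator. -/
noncomputable def conjPMap {H : Type*} [NormedAddCommGroup H] [InnerProductSpace ℂ H]
    (J : H →L[ℂ] H) (S : H →ₗ.[ℂ] H) : H →ₗ.[ℂ] H where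
  domain := S.domain.comap (J : H →ₗ[ℂ] H)
  toFun :=
    { toFun := fun f => J (S ⟨(J : H →ₗ[ℂ] H) f.1, f.2⟩)
      map_add' := by
        intro f g
        show J (S ⟨_, _⟩) = J (S ⟨_, _⟩) + J (S ⟨_, _⟩)
        rw [← map_add]
        congr 1
        rw [← S.map_add]
        congr 1
        ext
        simp
      map_smul' := by
        intro c f
        show J (S ⟨_, _⟩) = c • J (S ⟨_, _⟩)
        rw [← map_smul]
        congr 1
        rw [← S.map_smul]
        congr 1
        ext
        simp }


private lemma pmap_apply_congr {H : Type*} [NormedAddCommGroup H] [InnerProductSpace ℂ H]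
    {T S : H →ₗ.[ℂ] H} (h : T = S) (x : T.domain) : T x = S ⟨x.1, h ▸ x.2⟩ := by
  subst h; rfl

open Filter

/-- a spectral point of positive or negative type of a
`J`-self-adjoint operator is real. -/
theorem spectral_point_definite_type_real
    {H : Type*} [NormedAddCommGroup H] [InnerProductSpace ℂ H] [CompleteSpace H]
    (J : H →L[ℂ] H) (hJsa : IsSelfAdjoint J) (hJ2 : J ∘L J = 1)
    (T : H →ₗ.[ℂ] H) (hdense : Dense (T.domain : Set H)) (hclosed : T.IsClosed)
    (hJsaT : T = conjPMap J T.adjoint)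
    (lam : ℂ)
    (hap : ∃ f : ℕ → T.domain, (∀ n, ‖(f n : H)‖ = 1) ∧
      Tendsto (fun n => ‖T (f n) - lam • (f n : H)‖) atTop (nhds 0))
    (htype :
      (∀ f : ℕ → T.domain, (∀ n, ‖(f n : H)‖ = 1) →
        Tendsto (fun n => ‖T (f n) - lam • (f n : H)‖) atTop (nhds 0) →
        0 < atTop.liminf (fun n => (⟪J (f n : H), (f n : H)⟫_ℂ).re)) ∨
      (∀ f : ℕ → T.domain, (∀ n, ‖(f n : H)‖ = 1) →
        Tendsto (fun n => ‖T (f n) - lam • (f n : H)‖) atTop (nhds 0) →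
        atTop.limsup (fun n => (⟪J (f n : H), (f n : H)⟫_ℂ).re) < 0)) :
    lam.im = 0 := by
  obtain ⟨f, hnorm, hg⟩ := hap
  -- J is symmetric for the inner product
  have hJinner : ∀ x y : H, ⟪J x, y⟫_ℂ = ⟪x, J y⟫_ℂ := by
    intro x y
    conv_lhs => rw [← hJsa.adjoint_eq]
    rw [ContinuousLinearMap.adjoint_inner_left]
  have hJJ : ∀ x : H, J (J x) = x := by
    intro x
    have := ContinuousLinearMap.ext_iff.mp hJ2 x
    simpa using this
  -- ⟪x, J x⟫ is real
  have hw : ∀ x : H, (⟪x, J x⟫_ℂ).im = 0 := by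
    intro x
    rw [← Complex.conj_eq_iff_im, inner_conj_symm, hJinner]
  -- ⟪T x, J x⟫ is real
  have hreal : ∀ x : T.domain, (⟪T x, J (x : H)⟫_ℂ).im = 0 := by
    intro x
    have hmem : ∀ v : H, v ∈ T.domain → (J : H →ₗ[ℂ] H) v ∈ T.adjoint.domain := by
      intro v hv
      rw [hJsaT] at hv
      exact hv
    have hx : (J : H →ₗ[ℂ] H) (x : H) ∈ T.adjoint.domain := hmem _ x.2
    have hTx : T x = J (T.adjoint ⟨(J : H →ₗ[ℂ] H) (x : H), hx⟩) := by
      have h := pmap_apply_congr hJsaT x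
      exact h
    rw [← Complex.conj_eq_iff_im]
    calc (starRingEnd ℂ) ⟪T x, J (x : H)⟫_ℂ = ⟪J (x : H), T x⟫_ℂ := inner_conj_symm _ _
      _ = ⟪((⟨(J : H →ₗ[ℂ] H) (x : H), hx⟩ : T.adjoint.domain) : H), T x⟫_ℂ := rfl
      _ = ⟪T.adjoint ⟨(J : H →ₗ[ℂ] H) (x : H), hx⟩, (x : H)⟫_ℂ :=
          (T.adjoint_isFormalAdjoint hdense ⟨(J : H →ₗ[ℂ] H) (x : H), hx⟩ x).symm
      _ = ⟪J (J (T.adjoint ⟨(J : H →ₗ[ℂ] H) (x : H), hx⟩)), (x : H)⟫_ℂ := by rw [hJJ]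
      _ = ⟪J (T.adjoint ⟨(J : H →ₗ[ℂ] H) (x : H), hx⟩), J (x : H)⟫_ℂ := hJinner _ _
      _ = ⟪T x, J (x : H)⟫_ℂ := by rw [← hTx]
  set r : ℕ → ℝ := fun n => (⟪J (f n : H), (f n : H)⟫_ℂ).re with hr
  -- pointwise identity
  have hkey : ∀ n, lam.im * r n = (⟪T (f n) - lam • ((f n : H)), J ((f n : H))⟫_ℂ).im := by
    intro n
    have h1 : (⟪T (f n), J ((f n : H))⟫_ℂ).im = 0 := hreal (f n)
    have h2 : ⟪T (f n) - lam • ((f n : H)), J ((f n : H))⟫_ℂ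
        = ⟪T (f n), J ((f n : H))⟫_ℂ - ⟪lam • ((f n : H)), J ((f n : H))⟫_ℂ :=
      inner_sub_left _ _ _
    have h3 : ⟪lam • ((f n : H)), J ((f n : H))⟫_ℂ
        = (starRingEnd ℂ) lam * ⟪((f n : H)), J ((f n : H))⟫_ℂ := inner_smul_left _ _ _
    have h4 : (⟪((f n : H)), J ((f n : H))⟫_ℂ).im = 0 := hw _
    have h5 : r n = (⟪((f n : H)), J ((f n : H))⟫_ℂ).re := by
      rw [hr]; simp only [hJinner]
    rw [h5]
    have := congrArg Complex.im h2
    rw [h3] at this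
    simp only [Complex.sub_im, Complex.mul_im, h1, h4, Complex.conj_re, Complex.conj_im] at this
    linarith [this]
  -- the sequence lam.im * r n tends to 0
  have htends : Tendsto (fun n => lam.im * r n) atTop (nhds 0) := by
    refine squeeze_zero_norm (fun n => ?_) (by simpa using hg.mul_const ‖J‖)
    · rw [hkey n]
      calc ‖(⟪T (f n) - lam • ((f n : H)), J ((f n : H))⟫_ℂ).im‖
          = |(⟪T (f n) - lam • ((f n : H)), J ((f n : H))⟫_ℂ).im| := Real.norm_eq_abs _
        _ ≤ ‖⟪T (f n) - lam • ((f n : H)), J ((f n : H))⟫_ℂ‖ := Complex.abs_im_le_norm _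
        _ ≤ ‖T (f n) - lam • ((f n : H))‖ * ‖J ((f n : H))‖ := norm_inner_le_norm _ _
        _ ≤ ‖T (f n) - lam • ((f n : H))‖ * ‖J‖ := by
            apply mul_le_mul_of_nonneg_left _ (norm_nonneg _)
            calc ‖J ((f n : H))‖ ≤ ‖J‖ * ‖(f n : H)‖ := J.le_opNorm _
              _ = ‖J‖ := by rw [hnorm n, mul_one]
  by_contra him
  have hrt : Tendsto r atTop (nhds 0) := by
    have := htends.const_mul (lam.im)⁻¹
    simp only [mul_zero] at this
    have heq : (fun n => (lam.im)⁻¹ * (lam.im * r n)) = r := by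
      funext n
      rw [← mul_assoc, inv_mul_cancel₀ him, one_mul]
    rwa [heq] at this
  rcases htype with hpos | hneg
  · have h1 := hpos f hnorm hg
    rw [hrt.liminf_eq] at h1
    exact lt_irrefl _ h1
  · have h1 := hneg f hnorm hg
    rw [hrt.limsup_eq] at h1
    exact lt_irrefl _ h1
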